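/- For every μ-recursive k-ary partial function f on the natural numbers, there exists a first-order arithmetic formula p (in a language with natural number constants, successor, addition, comparison, and quantification over finite sequences of naturals) with free variables r, x₁, ..., x_k such that f(a₁,...,a_k) = z holds if and only if p is true under the assignment r ↦ z, x₁ ↦ a₁, ..., x_k ↦ a_k. -/

import Mathlib

/-- Terms of weak second-order arithmetic with `k` number variables and
`m` sequence variables: constants, successor, addition, sequence length
and sequence indexing. -/
inductive Term : ℕ → ℕ → Type
  | var {k m : ℕ} : Fin k → Term k m
  | const {k m : ℕ} : ℕ → Term k m
  | succ {k m : ℕ} : Term k m → Term k m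
  | add {k m : ℕ} : Term k m → Term k m → Term k m
  | len {k m : ℕ} : Fin m → Term k m
  | idx {k m : ℕ} : Fin m → Term k m → Term k m

def Term.eval : ∀ {k m : ℕ}, Term k m → (Fin k → ℕ) → (Fin m → List ℕ) → ℕ
  | _, _, .var i, v, _ => v i
  | _, _, .const n, _, _ => n
  | _, _, .succ t, v, w => t.eval v w + 1
  | _, _, .add t₁ t₂, v, w => t₁.eval v w + t₂.eval v w
  | _, _, .len j, _, w => (w j).length
  | _, _, .idx j t, v, w => (w j).getD (t.eval v w) 0

/-- Formulas of weak second-order arithmetic: equality, comparison, boolean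
connectives, quantification over naturals and over finite sequences of naturals. -/
inductive Formula : ℕ → ℕ → Type
  | eq {k m : ℕ} : Term k m → Term k m → Formula k m
  | lt {k m : ℕ} : Term k m → Term k m → Formula k m
  | not {k m : ℕ} : Formula k m → Formula k m
  | and {k m : ℕ} : Formula k m → Formula k m → Formula k m
  | exN {k m : ℕ} : Formula (k + 1) m → Formula k m
  | exS {k m : ℕ} : Formula k (m + 1) → Formula k m

def Formula.Eval : ∀ {k m : ℕ}, Formula k m → (Fin k → ℕ) → (Fin m → List ℕ) → Prop
  | _, _, .eq t₁ t₂, v, w => t₁.eval v w = t₂.eval v w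
  | _, _, .lt t₁ t₂, v, w => t₁.eval v w < t₂.eval v w
  | _, _, .not φ, v, w => ¬ φ.Eval v w
  | _, _, .and φ ψ, v, w => φ.Eval v w ∧ ψ.Eval v w
  | _, _, .exN φ, v, w => ∃ a : ℕ, φ.Eval (Fin.cons a v) w
  | _, _, .exS φ, v, w => ∃ s : List ℕ, φ.Eval v (Fin.cons s w)

/-! ### Renaming / substitution -/

def Term.map {k m k' m' : ℕ} (σ : Fin k → Term k' m') (τ : Fin m → Fin m') :
    Term k m → Term k' m'
  | .var i => σ i
  | .const n => .const n
  | .succ t => .succ (t.map σ τ)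
  | .add t₁ t₂ => .add (t₁.map σ τ) (t₂.map σ τ)
  | .len j => .len (τ j)
  | .idx j t => .idx (τ j) (t.map σ τ)

theorem Term.eval_map {k m k' m' : ℕ} (σ : Fin k → Term k' m') (τ : Fin m → Fin m')
    (t : Term k m) (v : Fin k' → ℕ) (w : Fin m' → List ℕ) :
    (t.map σ τ).eval v w = t.eval (fun i => (σ i).eval v w) (fun j => w (τ j)) := by
  induction t <;> simp [Term.map, Term.eval, *]

def Formula.map : ∀ {k m k' m' : ℕ}, Formula k m → (Fin k → Term k' m') → (Fin m → Fin m') →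
    Formula k' m'
  | _, _, _, _, .eq t₁ t₂, σ, τ => .eq (t₁.map σ τ) (t₂.map σ τ)
  | _, _, _, _, .lt t₁ t₂, σ, τ => .lt (t₁.map σ τ) (t₂.map σ τ)
  | _, _, _, _, .not φ, σ, τ => .not (φ.map σ τ)
  | _, _, _, _, .and φ ψ, σ, τ => .and (φ.map σ τ) (ψ.map σ τ)
  | _, _, _, _, .exN φ, σ, τ =>
      .exN (φ.map (Fin.cases (.var 0) (fun i => (σ i).map (fun j => .var j.succ) id)) τ)
  | _, _, _, _, .exS φ, σ, τ =>
      .exS (φ.map (fun i => (σ i).map .var Fin.succ) (Fin.cases 0 (fun j => (τ j).succ)))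

theorem Formula.eval_map : ∀ {k m k' m' : ℕ} (φ : Formula k m) (σ : Fin k → Term k' m')
    (τ : Fin m → Fin m') (v : Fin k' → ℕ) (w : Fin m' → List ℕ),
    (φ.map σ τ).Eval v w ↔ φ.Eval (fun i => (σ i).eval v w) (fun j => w (τ j))
  | _, _, _, _, .eq t₁ t₂, σ, τ, v, w => by simp [Formula.map, Formula.Eval, Term.eval_map]
  | _, _, _, _, .lt t₁ t₂, σ, τ, v, w => by simp [Formula.map, Formula.Eval, Term.eval_map]
  | _, _, _, _, .not φ, σ, τ, v, w => by
      simp [Formula.map, Formula.Eval, Formula.eval_map φ]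
  | _, _, _, _, .and φ ψ, σ, τ, v, w => by
      simp [Formula.map, Formula.Eval, Formula.eval_map φ, Formula.eval_map ψ]
  | _, _, _, _, .exN φ, σ, τ, v, w => by
      simp only [Formula.map, Formula.Eval]
      refine exists_congr fun a => ?_
      rw [Formula.eval_map φ]
      congr! 1
      funext i
      refine Fin.cases ?_ (fun i => ?_) i
      · simp [Term.eval]
      · simp [Term.eval_map, Term.eval]
  | _, _, _, _, .exS φ, σ, τ, v, w => by
      simp only [Formula.map, Formula.Eval]
      refine exists_congr fun s => ?_
      rw [Formula.eval_map φ]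
      congr! 1
      · funext i; simp [Term.eval_map, Term.eval]
      · funext j
        refine Fin.cases ?_ (fun j => ?_) j <;> simp

/-! ### Definability -/

def Definable (n : ℕ) (R : (Fin n → ℕ) → Prop) : Prop :=
  ∃ p : Formula n 0, ∀ (v : Fin n → ℕ) (w : Fin 0 → List ℕ), p.Eval v w ↔ R v

theorem Definable.congr {n : ℕ} {R S : (Fin n → ℕ) → Prop} (h : Definable n R)
    (e : ∀ v, R v ↔ S v) : Definable n S := by
  obtain ⟨p, hp⟩ := h; exact ⟨p, fun v w => (hp v w).trans (e v)⟩

/-! ### Iterated existentials and conjunctions -/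

def exIter : ∀ (j : ℕ) {k : ℕ}, Formula (k + j) 0 → Formula k 0
  | 0, _, φ => φ
  | j + 1, _, φ => exIter j (.exN φ)

def addCons : ∀ {j k : ℕ}, (Fin j → ℕ) → (Fin k → ℕ) → (Fin (k + j) → ℕ)
  | 0, _, _, v => v
  | _ + 1, _, u, v => Fin.cons (u 0) (addCons (fun i => u i.succ) v)

theorem addCons_succ {j k : ℕ} (u : Fin (j + 1) → ℕ) (v : Fin k → ℕ) :
    addCons u v = Fin.cons (u 0) (addCons (fun i => u i.succ) v) := rfl

theorem eval_exIter : ∀ (j : ℕ) {k : ℕ} (φ : Formula (k + j) 0) (v : Fin k → ℕ)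
    (w : Fin 0 → List ℕ),
    (exIter j φ).Eval v w ↔ ∃ u : Fin j → ℕ, φ.Eval (addCons u v) w
  | 0, _, φ, v, w => by
      simp only [exIter]
      exact ⟨fun h => ⟨Fin.elim0, h⟩, fun ⟨u, h⟩ => h⟩
  | j + 1, k, φ, v, w => by
      rw [show exIter (j+1) φ = exIter j (.exN φ) from rfl, eval_exIter j]
      constructor
      · rintro ⟨u, a, h⟩
        refine ⟨Fin.cons a u, ?_⟩
        rw [addCons_succ]
        have e1 : (Fin.cons a u : Fin (j+1) → ℕ) 0 = a := rfl
        have e2 : (fun i => (Fin.cons a u : Fin (j+1) → ℕ) i.succ) = u := by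
          funext i; simp
        rw [e1, e2]; exact h
      · rintro ⟨u, h⟩
        exact ⟨fun i => u i.succ, u 0, h⟩

theorem addCons_left : ∀ {j k : ℕ} (u : Fin j → ℕ) (v : Fin k → ℕ) (i : ℕ) (h : i < j)
    (h' : i < k + j), addCons u v ⟨i, h'⟩ = u ⟨i, h⟩
  | 0, _, _, _, _, h, _ => absurd h (Nat.not_lt_zero _)
  | j + 1, k, u, v, 0, h, h' => by simp [addCons, Fin.cons]
  | j + 1, k, u, v, i + 1, h, h' => by
      have : (⟨i + 1, h'⟩ : Fin (k + j + 1)) = (⟨i, by omega⟩ : Fin (k + j)).succ := by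
        ext; simp
      rw [addCons_succ, this, Fin.cons_succ, addCons_left _ _ i (by omega)]
      exact congrArg u (by ext; simp)

theorem addCons_right : ∀ {j k : ℕ} (u : Fin j → ℕ) (v : Fin k → ℕ) (i : Fin k)
    (h' : j + i.val < k + j), addCons u v ⟨j + i.val, h'⟩ = v i
  | 0, k, u, v, i, h' => by
      show v _ = v i
      congr 1; ext; simp
  | j + 1, k, u, v, i, h' => by
      have : (⟨j + 1 + i.val, h'⟩ : Fin (k + j + 1)) = (⟨j + i.val, by omega⟩ : Fin (k + j)).succ := by
        ext; simp; omega
      rw [addCons_succ, this, Fin.cons_succ, addCons_right]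

def andIter : ∀ {n k m : ℕ}, (Fin n → Formula k m) → Formula k m
  | 0, _, _, _ => .eq (.const 0) (.const 0)
  | _ + 1, _, _, φs => .and (φs 0) (andIter (fun i => φs i.succ))

theorem eval_andIter : ∀ {n k m : ℕ} (φs : Fin n → Formula k m) (v : Fin k → ℕ)
    (w : Fin m → List ℕ), (andIter φs).Eval v w ↔ ∀ i, (φs i).Eval v w
  | 0, _, _, φs, v, w => by simp [andIter, Formula.Eval, Term.eval]
  | n + 1, _, _, φs, v, w => by
      simp only [andIter, Formula.Eval, eval_andIter (fun i => φs i.succ)]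
      exact (Fin.forall_fin_succ (P := fun i => (φs i).Eval v w)).symm

/-! ### Composition -/

def compσF (m n : ℕ) : Fin (n + 1) → Term ((m + 1) + n) 0 :=
  Fin.cases (.var ⟨n, by omega⟩) (fun t => .var ⟨t.val, by have := t.isLt; omega⟩)

def compσG (m n : ℕ) (i : Fin n) : Fin (m + 1) → Term ((m + 1) + n) 0 :=
  Fin.cases (.var ⟨i.val, by have := i.isLt; omega⟩)
    (fun t => .var ⟨n + (t.val + 1), by have := t.isLt; omega⟩)

theorem addCons_apply_left {j k : ℕ} (u : Fin j → ℕ) (v : Fin k → ℕ) (i : Fin (k + j))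
    (t : Fin j) (h : i.val = t.val) : addCons u v i = u t := by
  have hi : i = ⟨t.val, by rw [← h]; exact i.isLt⟩ := Fin.ext h
  rw [hi, addCons_left u v t.val t.isLt]

theorem addCons_apply_right {j k : ℕ} (u : Fin j → ℕ) (v : Fin k → ℕ) (i : Fin (k + j))
    (t : Fin k) (h : i.val = j + t.val) : addCons u v i = v t := by
  have hi : i = ⟨j + t.val, by rw [← h]; exact i.isLt⟩ := Fin.ext h
  rw [hi, addCons_right u v t]

theorem compσF_eval {m n : ℕ} (u : Fin n → ℕ) (v : Fin (m + 1) → ℕ) (w : Fin 0 → List ℕ) :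
    (fun jdx => (compσF m n jdx).eval (addCons u v) w) = Fin.cons (v 0) u := by
  funext jdx
  refine Fin.cases ?_ (fun t => ?_) jdx
  · simp only [compσF, Fin.cases_zero, Term.eval, Fin.cons_zero]
    exact addCons_apply_right u v _ 0 (by simp)
  · simp only [compσF, Fin.cases_succ, Term.eval, Fin.cons_succ]
    exact addCons_apply_left u v _ t rfl

theorem compσG_eval {m n : ℕ} (i : Fin n) (u : Fin n → ℕ) (v : Fin (m + 1) → ℕ)
    (w : Fin 0 → List ℕ) :
    (fun jdx => (compσG m n i jdx).eval (addCons u v) w)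
      = Fin.cons (u i) (fun t => v t.succ) := by
  funext jdx
  refine Fin.cases ?_ (fun t => ?_) jdx
  · simp only [compσG, Fin.cases_zero, Term.eval, Fin.cons_zero]
    exact addCons_apply_left u v _ i rfl
  · simp only [compσG, Fin.cases_succ, Term.eval, Fin.cons_succ]
    exact addCons_apply_right u v _ t.succ (by simp)

theorem comp_definable {m n : ℕ} {F : (Fin (n + 1) → ℕ) → Prop}
    {G : Fin n → (Fin (m + 1) → ℕ) → Prop}
    (hF : Definable (n + 1) F) (hG : ∀ i, Definable (m + 1) (G i)) :
    Definable (m + 1) (fun v => ∃ u : Fin n → ℕ,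
      (∀ i, G i (Fin.cons (u i) (fun t => v t.succ))) ∧ F (Fin.cons (v 0) u)) := by
  obtain ⟨pF, hpF⟩ := hF
  choose pG hpG using hG
  refine ⟨exIter n (.and (andIter fun i => (pG i).map (compσG m n i) Fin.elim0)
      (pF.map (compσF m n) Fin.elim0)), fun v w => ?_⟩
  rw [eval_exIter]
  refine exists_congr fun u => ?_
  simp only [Formula.Eval, eval_andIter, Formula.eval_map, compσG_eval, compσF_eval, hpF, hpG]

/-! ### Part / Vector helpers -/

theorem mem_mOfFn : ∀ {n : ℕ} {g : Fin n → Part ℕ} {ys : List.Vector ℕ n},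
    ys ∈ List.Vector.mOfFn g ↔ ∀ i, ys.get i ∈ g i
  | 0, g, ys => by
      simp only [List.Vector.mOfFn]
      constructor
      · intro _ i; exact i.elim0
      · intro _
        have : ys = List.Vector.nil := by
          apply List.Vector.ext; intro i; exact i.elim0
        simp [this, pure, Part.mem_some_iff]
  | n + 1, g, ys => by
      simp only [List.Vector.mOfFn, bind, Part.bind_eq_bind, Part.mem_bind_iff, pure,
        Part.mem_some_iff]
      constructor
      · rintro ⟨a, ha, vv, hv, rfl⟩ i
        refine Fin.cases ?_ (fun t => ?_) i
        · simpa [List.Vector.get_cons_zero] using ha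
        · simpa [List.Vector.get_cons_succ] using mem_mOfFn.1 hv t
      · intro h
        refine ⟨ys.head, by simpa [← List.Vector.get_zero] using h 0, ys.tail,
          mem_mOfFn.2 fun i => ?_, (ys.cons_head_tail).symm⟩
        simpa [List.Vector.get_tail_succ] using h i.succ

theorem exists_list_iff (F : ℕ → ℕ) (G : ℕ → ℕ → ℕ) (hF : ∀ y, F (y + 1) = G y (F y))
    (a z : ℕ) :
    z = F a ↔ ∃ s : List ℕ, s.length = a + 1 ∧ s.getD 0 0 = F 0 ∧
      (∀ y, y < a → s.getD (y + 1) 0 = G y (s.getD y 0)) ∧ z = s.getD a 0 := by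
  have hg : ∀ i, i < a + 1 → ((List.range (a + 1)).map F).getD i 0 = F i := by
    intro i hi
    rw [List.getD_eq_getElem?_getD]
    simp [List.getElem?_map, List.getElem?_range, hi]
  constructor
  · rintro rfl
    exact ⟨(List.range (a + 1)).map F, by simp, hg 0 (by omega),
      fun y hy => by rw [hg _ (by omega), hg _ (by omega), hF], (hg a (by omega)).symm⟩
  · rintro ⟨s, hlen, h0, hstep, rfl⟩
    have key : ∀ y, y ≤ a → s.getD y 0 = F y := by
      intro y
      induction y with
      | zero => intro _; exact h0
      | succ y ih => intro hy; rw [hstep y (by omega), ih (by omega), hF]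
    exact key a le_rfl

/-! ### Vector helpers -/

theorem ofFn_cons {n : ℕ} (a : ℕ) (g : Fin n → ℕ) :
    List.Vector.ofFn (Fin.cons a g) = a ::ᵥ List.Vector.ofFn g := by
  apply List.Vector.ext
  intro i
  refine Fin.cases ?_ (fun t => ?_) i <;>
    simp [List.Vector.get_ofFn, List.Vector.get_cons_zero, List.Vector.get_cons_succ]

theorem ofFn_eq_cons {n : ℕ} (v : Fin (n + 1) → ℕ) :
    List.Vector.ofFn v = v 0 ::ᵥ List.Vector.ofFn (fun t => v t.succ) := by
  rw [← ofFn_cons]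
  congr
  exact (Fin.cons_self_tail v).symm

/-! ### prec σ's -/

def precσB (n : ℕ) : Fin (n + 1) → Term (n + 2) 1 :=
  Fin.cases (.idx 0 (.const 0)) (fun t => .var t.succ.succ)

def precσC (n : ℕ) : Fin (n + 3) → Term (n + 3) 1 :=
  Fin.cases (.idx 0 (.succ (.var 0)))
    (Fin.cases (.var 0) (Fin.cases (.idx 0 (.var 0)) (fun t => .var t.succ.succ.succ)))

theorem precσB_eval (n : ℕ) (v : Fin (n + 2) → ℕ) (s : List ℕ) (w : Fin 0 → List ℕ) :
    (fun jdx => (precσB n jdx).eval v (Fin.cons s w)) =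
      Fin.cons (s.getD 0 0) (fun t : Fin n => v t.succ.succ) := by
  funext jdx
  refine Fin.cases ?_ (fun t => ?_) jdx <;>
    simp [precσB, Term.eval, Fin.cons_zero, Fin.cons_succ]

theorem precσC_eval (n : ℕ) (y : ℕ) (v : Fin (n + 2) → ℕ) (s : List ℕ) (w : Fin 0 → List ℕ) :
    (fun jdx => (precσC n jdx).eval (Fin.cons y v) (Fin.cons s w)) =
      Fin.cons (s.getD (y + 1) 0) (Fin.cons y (Fin.cons (s.getD y 0)
        (fun t : Fin n => v t.succ.succ))) := by
  funext jdx
  refine Fin.cases ?_ (fun j1 => ?_) jdx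
  · simp only [precσC, Fin.cases_zero, Term.eval, Fin.cons_zero]
  · refine Fin.cases ?_ (fun j2 => ?_) j1
    · simp only [precσC, Fin.cases_succ, Fin.cases_zero, Term.eval, Fin.cons_succ, Fin.cons_zero]
    · refine Fin.cases ?_ (fun t => ?_) j2 <;>
        simp only [precσC, Fin.cases_succ, Fin.cases_zero, Term.eval, Fin.cons_succ, Fin.cons_zero]

/-! ### Primrec' definability -/

theorem primrec'_definable {n : ℕ} {f : List.Vector ℕ n → ℕ} (hf : Nat.Primrec' f) :
    Definable (n + 1) (fun v => v 0 = f (List.Vector.ofFn fun i => v i.succ)) := by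
  induction hf with
  | zero =>
      exact ⟨.eq (.var 0) (.const 0), fun v w => by simp [Formula.Eval, Term.eval]⟩
  | succ =>
      refine ⟨.eq (.var 0) (.succ (.var 1)), fun v w => ?_⟩
      have h1 : (Fin.succ 0 : Fin 2) = 1 := by ext; simp
      simp [Formula.Eval, Term.eval, List.Vector.head_ofFn, h1, Nat.succ_eq_add_one]
  | get i =>
      exact ⟨.eq (.var 0) (.var i.succ), fun v w => by
        simp [Formula.Eval, Term.eval, List.Vector.get_ofFn]⟩
  | @comp m n f g hf hg ihf ihg =>
      refine (comp_definable ihf ihg).congr fun v => ?_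
      simp only [Fin.cons_zero, Fin.cons_succ]
      constructor
      · rintro ⟨u, hu, hF⟩
        rw [hF]
        congr 1
        apply List.Vector.ext
        intro i
        simp [List.Vector.get_ofFn, hu i]
      · intro h
        exact ⟨fun i => g i (List.Vector.ofFn fun t => v t.succ), fun i => rfl,
          by simpa using h⟩
  | @prec n f g hf hg ihf ihg =>
      obtain ⟨pF, hpF⟩ := ihf
      obtain ⟨pG, hpG⟩ := ihg
      refine ⟨.exS (.and (.eq (.len 0) (.succ (.var 1)))
          (.and (pF.map (precσB n) Fin.elim0)
          (.and (.not (.exN (.and (.lt (.var 0) (.var (Fin.succ 1)))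
                (.not (pG.map (precσC n) Fin.elim0)))))
            (.eq (.var 0) (.idx 0 (.var 1)))))), fun v w => ?_⟩
      have htail : (List.Vector.ofFn fun i : Fin (n + 1) => v i.succ).tail
          = List.Vector.ofFn (fun t : Fin n => v t.succ.succ) := by
        apply List.Vector.ext
        intro i
        simp [List.Vector.get_tail_succ, List.Vector.get_ofFn]
      have hhead : (List.Vector.ofFn fun i : Fin (n + 1) => v i.succ).head = v 1 := by
        rw [List.Vector.head_ofFn]
        exact congrArg v (by ext; simp)
      beta_reduce
      rw [htail, hhead]
      set W : List.Vector ℕ n := List.Vector.ofFn (fun t : Fin n => v t.succ.succ) with hW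
      refine Iff.trans ?_ (exists_list_iff
        (fun y => Nat.rec (f W) (fun y IH => g (y ::ᵥ IH ::ᵥ W)) y)
        (fun y r => g (y ::ᵥ r ::ᵥ W)) (fun y => rfl) (v 1) (v 0)).symm
      simp only [Formula.Eval, Term.eval, Formula.eval_map, precσB_eval, precσC_eval, hpF, hpG,
        Fin.cons_zero, Fin.cons_succ, not_exists, not_and, not_not]
      refine exists_congr fun s => ?_
      beta_reduce
      refine and_congr Iff.rfl (and_congr ?_ (and_congr ?_ Iff.rfl))
      · exact Iff.rfl
      · refine forall_congr' fun y => ?_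
        refine imp_congr Iff.rfl ?_
        have hv : List.Vector.ofFn
              (Fin.cons y (Fin.cons (s.getD y 0) fun t : Fin n => v t.succ.succ))
            = y ::ᵥ s.getD y 0 ::ᵥ W := by
          rw [ofFn_cons, ofFn_cons, hW]
        rw [hv]

/-! ### rfind σ's -/

def rfindσ₁ (n : ℕ) : Fin (n + 2) → Term (n + 1) 0 :=
  Fin.cases (.const 0) (fun t => .var t)

def rfindσ₂ (n : ℕ) : Fin (n + 2) → Term (n + 2) 0 :=
  Fin.cases (.const 0) (Fin.cases (.var 0) (fun t => .var t.succ.succ))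

theorem rfindσ₁_eval (n : ℕ) (v : Fin (n + 1) → ℕ) (w : Fin 0 → List ℕ) :
    (fun jdx => (rfindσ₁ n jdx).eval v w) = Fin.cons 0 v := by
  funext jdx
  refine Fin.cases ?_ (fun t => ?_) jdx
  · simp only [rfindσ₁, Fin.cases_zero, Term.eval, Fin.cons_zero]
  · simp only [rfindσ₁, Fin.cases_succ, Term.eval, Fin.cons_succ]

theorem rfindσ₂_eval (n : ℕ) (y : ℕ) (v : Fin (n + 1) → ℕ) (w : Fin 0 → List ℕ) :
    (fun jdx => (rfindσ₂ n jdx).eval (Fin.cons y v) w)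
      = Fin.cons 0 (Fin.cons y (fun t : Fin n => v t.succ)) := by
  funext jdx
  refine Fin.cases ?_ (fun j1 => ?_) jdx
  · simp only [rfindσ₂, Fin.cases_zero, Term.eval, Fin.cons_zero]
  · refine Fin.cases ?_ (fun t => ?_) j1 <;>
      simp only [rfindσ₂, Fin.cases_succ, Fin.cases_zero, Term.eval, Fin.cons_succ, Fin.cons_zero]

/-! ### Partrec' definability -/

theorem partrec'_definable {n : ℕ} {f : List.Vector ℕ n →. ℕ} (hf : Nat.Partrec' f) :
    Definable (n + 1) (fun v => v 0 ∈ f (List.Vector.ofFn fun i => v i.succ)) := by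
  induction hf with
  | prim hf =>
      exact (primrec'_definable hf).congr fun v => by
        simp [PFun.coe_val, Part.mem_some_iff]
  | @comp m n f g hf hg ihf ihg =>
      refine (comp_definable ihf ihg).congr fun v => ?_
      simp only [Fin.cons_zero, Fin.cons_succ]
      rw [show ((List.Vector.mOfFn fun i => g i (List.Vector.ofFn fun t => v t.succ)) >>= f)
        = Part.bind (List.Vector.mOfFn fun i => g i (List.Vector.ofFn fun t => v t.succ)) f
        from rfl]
      refine Iff.trans ?_ (Part.mem_bind_iff).symm
      constructor
      · rintro ⟨u, hu, hF⟩
        refine ⟨List.Vector.ofFn u, mem_mOfFn.2 fun i => ?_, ?_⟩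
        · simpa [List.Vector.get_ofFn] using hu i
        · simpa using hF
      · rintro ⟨ys, hys, hF⟩
        refine ⟨ys.get, fun i => by simpa using mem_mOfFn.1 hys i, ?_⟩
        simpa [List.Vector.ofFn_get] using hF
  | @rfind n f hf ihf =>
      obtain ⟨pF, hpF⟩ := ihf
      refine ⟨.and (pF.map (rfindσ₁ n) Fin.elim0)
          (.not (.exN (.and (.lt (.var 0) (.var (Fin.succ 0)))
            (pF.map (rfindσ₂ n) Fin.elim0)))), fun v w => ?_⟩
      have h1 : List.Vector.ofFn v
          = v 0 ::ᵥ List.Vector.ofFn (fun t : Fin n => v t.succ) := ofFn_eq_cons v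
      simp only [Formula.Eval, Term.eval, Formula.eval_map, rfindσ₁_eval, rfindσ₂_eval, hpF,
        Fin.cons_zero, Fin.cons_succ, PFun.coe_val, Part.mem_some_iff, not_exists, not_and]
      refine Iff.trans ?_ (Nat.mem_rfind).symm
      simp only [Part.mem_some_iff]
      constructor
      · rintro ⟨hz, hlt⟩
        constructor
        · refine (decide_eq_true_iff.mpr ?_).symm
          show f (List.Vector.ofFn v) = 0
          exact hz.symm
        · intro m hm
          have hthis := hlt m hm
          refine (decide_eq_false_iff_not.mpr ?_).symm
          intro hc
          apply hthis
          show (0 : ℕ) = f (List.Vector.ofFn (Fin.cons m fun t => v t.succ))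
          rw [ofFn_cons]
          exact hc.symm
      · rintro ⟨hz, hlt⟩
        have hz' : f (List.Vector.ofFn v) = 0 := by
          rw [h1]; exact decide_eq_true_iff.mp hz.symm
        constructor
        · exact hz'.symm
        · intro m hm hc
          have hthis := decide_eq_false_iff_not.mp (hlt hm).symm
          apply hthis
          have hc' : (0 : ℕ) = f (List.Vector.ofFn (Fin.cons m fun t => v t.succ)) := hc
          rw [ofFn_cons] at hc'
          exact hc'.symm

theorem mu_recursive_definable' {k : ℕ} (f : List.Vector ℕ k →. ℕ)
    (hf : Nat.Partrec' f) :
    ∃ p : Formula (k + 1) 0,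
      ∀ (a : List.Vector ℕ k) (z : ℕ),
        z ∈ f a ↔ p.Eval (Fin.cons z a.get) (fun j => j.elim0) := by
  obtain ⟨p, hp⟩ := partrec'_definable hf
  refine ⟨p, fun a z => ?_⟩
  rw [hp]
  simp only [Fin.cons_zero, Fin.cons_succ]
  rw [List.Vector.ofFn_get]

/-- For every μ-recursive `k`-ary partial function `f` there is a formula `p`
with free variables `r, x₁, …, x_k` (variable `0` playing the role of `r`)
such that `f(a₁,…,a_k) = z` iff `p` is true at `r ↦ z, xᵢ ↦ aᵢ`. -/
theorem mu_recursive_definable {k : ℕ} (f : List.Vector ℕ k →. ℕ)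
    (hf : Nat.Partrec' f) :
    ∃ p : Formula (k + 1) 0,
      ∀ (a : List.Vector ℕ k) (z : ℕ),
        z ∈ f a ↔ p.Eval (Fin.cons z a.get) (fun j => j.elim0) := by
  exact mu_recursive_definable' f hf
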